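/- Let K ⊂ GL(d,ℝ) be compact with L_K = sup_{g∈K} max(‖g‖,‖g⁻¹‖)², and let μ, μ' be probability measures supported in K. Then for every p ∈ ℕ*, the Wasserstein distance between convolution powers satisfies d_W((μ')^{*p}, μ^{*p}) ≤ p · L_K^{(p−1)/2} · d_W(μ', μ). -/

import Mathlib

open MeasureTheory

instance matrixMeasurableSpace {d : ℕ} : MeasurableSpace (Matrix (Fin d) (Fin d) ℝ) :=
  MeasurableSpace.pi

/-- The operator norm of a `d × d` real matrix acting on Euclidean space. -/
noncomputable def opN {d : ℕ} (A : Matrix (Fin d) (Fin d) ℝ) : ℝ :=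
  ‖(Matrix.toEuclideanCLM (𝕜 := ℝ) A :
      EuclideanSpace ℝ (Fin d) →L[ℝ] EuclideanSpace ℝ (Fin d))‖

/-- The Kantorovich–Rubinstein (Wasserstein) distance for the operator norm metric. -/
noncomputable def dW {d : ℕ} (μ ν : Measure (Matrix (Fin d) (Fin d) ℝ)) : ℝ :=
  sSup {r : ℝ | ∃ f : Matrix (Fin d) (Fin d) ℝ → ℝ,
    (∀ A B, |f A - f B| ≤ opN (A - B)) ∧ (∃ C, ∀ A, |f A| ≤ C) ∧
    r = |(∫ g, f g ∂ν) - ∫ g, f g ∂μ|}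

/-- The `p`-fold convolution power of `μ`: the pushforward of `μ^{⊗p}` under
`(g₁, …, g_p) ↦ g_p ⋯ g₁`. -/
noncomputable def convPow {d : ℕ} (μ : Measure (Matrix (Fin d) (Fin d) ℝ)) (p : ℕ) :
    Measure (Matrix (Fin d) (Fin d) ℝ) :=
  Measure.map (fun t : Fin p → Matrix (Fin d) (Fin d) ℝ => (List.ofFn t).reverse.prod)
    (Measure.pi fun _ => μ)

namespace DWAux

variable {d : ℕ}

local notation "Mat" => Matrix (Fin d) (Fin d) ℝ

instance : BorelSpace Mat := inferInstanceAs (BorelSpace (Fin d → Fin d → ℝ))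

instance : SecondCountableTopology Mat :=
  inferInstanceAs (SecondCountableTopology (Fin d → Fin d → ℝ))

lemma opN_nonneg (A : Mat) : 0 ≤ opN A := norm_nonneg _

lemma opN_mul_le (A B : Mat) : opN (A * B) ≤ opN A * opN B := by
  unfold opN; rw [map_mul]; exact norm_mul_le _ _

lemma opN_one_le : opN (1 : Mat) ≤ 1 := by
  unfold opN; rw [map_one]; exact ContinuousLinearMap.norm_id_le

lemma opN_zero : opN (0 : Mat) = 0 := by
  unfold opN; rw [map_zero, norm_zero]

lemma continuous_opN : Continuous (opN (d := d)) := by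
  have h1 : Continuous fun A : Mat =>
      (Matrix.toEuclideanCLM (𝕜 := ℝ) A :
        EuclideanSpace ℝ (Fin d) →L[ℝ] EuclideanSpace ℝ (Fin d)) := by
    have : IsLinearMap ℝ fun A : Mat =>
        (Matrix.toEuclideanCLM (𝕜 := ℝ) A :
          EuclideanSpace ℝ (Fin d) →L[ℝ] EuclideanSpace ℝ (Fin d)) :=
      ⟨fun x y => map_add _ x y, fun c x => map_smul _ c x⟩
    exact LinearMap.continuous_of_finiteDimensional this.mk'
  exact continuous_norm.comp h1

lemma lipschitz_continuous {f : Mat → ℝ} {C : ℝ}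
    (hf : ∀ A B, |f A - f B| ≤ C * opN (A - B)) : Continuous f := by
  rw [continuous_iff_continuousAt]
  intro A
  have hb : Continuous fun B : Mat => C * opN (B - A) :=
    continuous_const.mul (continuous_opN.comp (continuous_id.sub continuous_const))
  have h0 : Filter.Tendsto (fun B => C * opN (B - A)) (nhds A) (nhds 0) := by
    have := hb.tendsto A
    simpa [opN_zero] using this
  have habs : Filter.Tendsto (fun B => |f B - f A|) (nhds A) (nhds 0) :=
    squeeze_zero (fun B => abs_nonneg _) (fun B => hf B A) h0
  rw [Metric.continuousAt_iff']
  intro ε hε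
  have := (Metric.tendsto_nhds.mp habs) ε hε
  filter_upwards [this] with B hB
  simpa [Real.dist_eq, abs_abs] using lt_of_le_of_lt (le_abs_self _) (by simpa using hB)

lemma integrable_of_cont_bdd (σ : Measure Mat) [IsProbabilityMeasure σ]
    {g : Mat → ℝ} (hg : Continuous g) {Mb : ℝ} (hMb : ∀ x, |g x| ≤ Mb) :
    Integrable g σ :=
  ⟨hg.aestronglyMeasurable,
    HasFiniteIntegral.of_bounded (C := Mb) (Filter.Eventually.of_forall fun x => by
      simpa using hMb x)⟩

/-- The defining set of `dW`. -/
def dWSet (μ ν : Measure Mat) : Set ℝ :=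
  {r : ℝ | ∃ f : Mat → ℝ,
    (∀ A B, |f A - f B| ≤ opN (A - B)) ∧ (∃ C, ∀ A, |f A| ≤ C) ∧
    r = |(∫ g, f g ∂ν) - ∫ g, f g ∂μ|}

lemma dW_eq_sSup (μ ν : Measure Mat) : dW μ ν = sSup (dWSet μ ν) := rfl

lemma zero_mem_dWSet (μ ν : Measure Mat) : (0 : ℝ) ∈ dWSet μ ν := by
  refine ⟨fun _ => 0, fun A B => by simpa using opN_nonneg (A - B), ⟨0, fun A => by simp⟩, ?_⟩
  simp

lemma bddAbove_dWSet (μ ν : Measure Mat) [IsProbabilityMeasure μ] [IsProbabilityMeasure ν]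
    {R : ℝ} (hμ : μ {A : Mat | opN A ≤ R}ᶜ = 0) (hν : ν {A : Mat | opN A ≤ R}ᶜ = 0) :
    BddAbove (dWSet μ ν) := by
  refine ⟨2 * R, ?_⟩
  rintro r ⟨f, hlip, ⟨Mb, hMb⟩, rfl⟩
  have hlip' : ∀ A B, |f A - f B| ≤ 1 * opN (A - B) := by
    intro A B; simpa using hlip A B
  have hcont : Continuous f := lipschitz_continuous hlip'
  have key : ∀ (σ : Measure Mat), IsProbabilityMeasure σ → σ {A : Mat | opN A ≤ R}ᶜ = 0 →
      |(∫ g, f g ∂σ) - f 0| ≤ R := by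
    intro σ hσ hσR
    have hint : Integrable f σ := integrable_of_cont_bdd σ hcont hMb
    have : (∫ g, f g ∂σ) - f 0 = ∫ g, (f g - f 0) ∂σ := by
      rw [integral_sub hint (integrable_const _), integral_const]
      simp [measure_univ]
    rw [this]
    have hae : ∀ᵐ g ∂σ, ‖f g - f 0‖ ≤ R := by
      have : ∀ᵐ g ∂σ, g ∈ {A : Mat | opN A ≤ R} :=
        MeasureTheory.ae_iff.mpr (by simpa [Set.compl_setOf] using hσR)
      filter_upwards [this] with g hg
      calc ‖f g - f 0‖ = |f g - f 0| := rfl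
        _ ≤ opN (g - 0) := hlip g 0
        _ = opN g := by rw [sub_zero]
        _ ≤ R := hg
    calc |(∫ g, (f g - f 0) ∂σ)| = ‖∫ g, (f g - f 0) ∂σ‖ := rfl
      _ ≤ R * (σ Set.univ).toReal := norm_integral_le_of_norm_le_const hae
      _ = R := by simp [measure_univ]
  calc |(∫ g, f g ∂ν) - ∫ g, f g ∂μ|
      = |((∫ g, f g ∂ν) - f 0) - ((∫ g, f g ∂μ) - f 0)| := by ring_nf
    _ ≤ |(∫ g, f g ∂ν) - f 0| + |(∫ g, f g ∂μ) - f 0| := abs_sub _ _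
    _ ≤ R + R := add_le_add (key ν inferInstance hν) (key μ inferInstance hμ)
    _ = 2 * R := by ring

lemma dW_nonneg {μ ν : Measure Mat} (hbdd : BddAbove (dWSet μ ν)) : 0 ≤ dW μ ν :=
  le_csSup hbdd (zero_mem_dWSet μ ν)

lemma abs_integral_sub_le_dW (μ ν : Measure Mat) [IsProbabilityMeasure μ]
    [IsProbabilityMeasure ν] (hbdd : BddAbove (dWSet μ ν))
    {f : Mat → ℝ} {C : ℝ} (hC : 0 ≤ C)
    (hlip : ∀ A B, |f A - f B| ≤ C * opN (A - B)) (hbf : ∃ Mb, ∀ A, |f A| ≤ Mb) :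
    |(∫ g, f g ∂ν) - ∫ g, f g ∂μ| ≤ C * dW μ ν := by
  rcases eq_or_lt_of_le hC with hC0 | hCpos
  · -- C = 0 : f is constant
    have : ∀ A, f A = f 0 := by
      intro A
      have h := hlip A 0
      rw [← hC0, zero_mul] at h
      have h2 : |f A - f 0| = 0 := le_antisymm h (abs_nonneg _)
      have h3 := abs_eq_zero.mp h2
      linarith
    have hfc : f = fun _ => f 0 := funext this
    rw [hfc]
    simp only [integral_const, measure_univ, probReal_univ, ENNReal.toReal_one, smul_eq_mul, one_mul,
      sub_self, abs_zero]
    exact mul_nonneg hC (dW_nonneg hbdd)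
  · rcases hbf with ⟨Mb, hMb⟩
    set g : Mat → ℝ := fun A => C⁻¹ * f A with hg
    have hglip : ∀ A B, |g A - g B| ≤ opN (A - B) := by
      intro A B
      have : g A - g B = C⁻¹ * (f A - f B) := by rw [hg]; ring
      rw [this, abs_mul, abs_of_pos (inv_pos.mpr hCpos)]
      calc C⁻¹ * |f A - f B| ≤ C⁻¹ * (C * opN (A - B)) := by
            exact mul_le_mul_of_nonneg_left (hlip A B) (le_of_lt (inv_pos.mpr hCpos))
        _ = opN (A - B) := by field_simp
    have hgbdd : ∃ Cb, ∀ A, |g A| ≤ Cb := by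
      refine ⟨C⁻¹ * Mb, fun A => ?_⟩
      rw [hg]; simp only []
      rw [abs_mul, abs_of_pos (inv_pos.mpr hCpos)]
      exact mul_le_mul_of_nonneg_left (hMb A) (le_of_lt (inv_pos.mpr hCpos))
    have hmem : |(∫ x, g x ∂ν) - ∫ x, g x ∂μ| ∈ dWSet μ ν := ⟨g, hglip, hgbdd, rfl⟩
    have hle := le_csSup hbdd hmem
    have hint : ∀ (σ : Measure Mat), IsProbabilityMeasure σ → (∫ x, g x ∂σ) = C⁻¹ * ∫ x, f x ∂σ := by
      intro σ _
      rw [hg]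
      exact integral_const_mul _ _
    rw [hint μ inferInstance, hint ν inferInstance] at hle
    have : |C⁻¹ * (∫ x, f x ∂ν) - C⁻¹ * (∫ x, f x ∂μ)| = C⁻¹ * |(∫ x, f x ∂ν) - ∫ x, f x ∂μ| := by
      rw [← mul_sub, abs_mul, abs_of_pos (inv_pos.mpr hCpos)]
    rw [this] at hle
    calc |(∫ x, f x ∂ν) - ∫ x, f x ∂μ| = C * (C⁻¹ * |(∫ x, f x ∂ν) - ∫ x, f x ∂μ|) := by
          field_simp
      _ ≤ C * dW μ ν := mul_le_mul_of_nonneg_left hle hC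


lemma continuous_listProd (p : ℕ) :
    Continuous fun t : Fin p → Mat => (List.ofFn t).reverse.prod := by
  induction p with
  | zero => simpa using continuous_const
  | succ n ih =>
    have heq : (fun t : Fin (n+1) → Mat => (List.ofFn t).reverse.prod)
        = fun t => (List.ofFn (fun i : Fin n => t i.succ)).reverse.prod * t 0 := by
      funext t
      rw [List.ofFn_succ, List.reverse_cons, List.prod_append]
      simp
    rw [heq]
    exact (ih.comp (continuous_pi fun i => continuous_apply _)).matrix_mul
      (continuous_apply 0)

lemma measurable_listProd (p : ℕ) :
    Measurable fun t : Fin p → Mat => (List.ofFn t).reverse.prod :=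
  (continuous_listProd p).measurable

instance convPow_isProb (ν : Measure Mat) [IsProbabilityMeasure ν] (p : ℕ) :
    IsProbabilityMeasure (convPow ν p) :=
  Measure.isProbabilityMeasure_map (measurable_listProd p).aemeasurable

lemma convPow_zero (ν : Measure Mat) [IsProbabilityMeasure ν] :
    convPow ν 0 = Measure.dirac (1 : Mat) := by
  unfold convPow
  have h : (fun t : Fin 0 → Mat => (List.ofFn t).reverse.prod) = fun _ => (1 : Mat) := by
    funext t; simp
  rw [h, Measure.map_const]
  simp

lemma convPow_succ (ν : Measure Mat) [IsProbabilityMeasure ν] (p : ℕ) :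
    convPow ν (p + 1) =
      Measure.map (fun x : Mat × Mat => x.2 * x.1) (ν.prod (convPow ν p)) := by
  have hmp := measurePreserving_piFinSuccAbove (fun _ : Fin (p+1) => ν) 0
  set e := MeasurableEquiv.piFinSuccAbove (fun _ : Fin (p+1) => Mat) 0 with he
  have hpi : (Measure.pi fun _ : Fin (p+1) => ν)
      = Measure.map e.symm ((ν.prod (Measure.pi fun _ : Fin p => ν))) := by
    rw [← hmp.map_eq, MeasurableEquiv.map_symm_map]
  unfold convPow
  rw [hpi, Measure.map_map (measurable_listProd (p+1)) e.symm.measurable]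
  have hcomp : ((fun t : Fin (p+1) → Mat => (List.ofFn t).reverse.prod) ∘ e.symm)
      = (fun x : Mat × Mat => x.2 * x.1) ∘
        (Prod.map id (fun t : Fin p → Mat => (List.ofFn t).reverse.prod)) := by
    funext x
    rcases x with ⟨h, t⟩
    simp only [Function.comp_apply, Prod.map_apply, id_eq]
    have hesymm : e.symm (h, t) = Fin.cons h t := by
      rw [he]
      simp [MeasurableEquiv.piFinSuccAbove, Fin.insertNthEquiv]
    rw [hesymm]
    rw [List.ofFn_succ]
    simp only [Fin.cons_zero, Fin.cons_succ]
    rw [List.reverse_cons, List.prod_append]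
    simp
  rw [hcomp, ← Measure.map_map (by exact (continuous_snd.matrix_mul continuous_fst).measurable)
      ((measurable_id.prodMap (measurable_listProd p)))]
  rw [← Measure.map_prod_map _ _ measurable_id (measurable_listProd p)]
  rw [Measure.map_id]

lemma integral_convPow_succ (ν : Measure Mat) [IsProbabilityMeasure ν] (p : ℕ)
    {f : Mat → ℝ} (hf : Continuous f) {Mb : ℝ} (hMb : ∀ A, |f A| ≤ Mb) :
    (∫ g, f g ∂(convPow ν (p+1)))
      = ∫ h, ∫ A, f (A * h) ∂(convPow ν p) ∂ν := by
  rw [convPow_succ]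
  rw [integral_map (by exact (continuous_snd.matrix_mul continuous_fst).measurable.aemeasurable)
    hf.aestronglyMeasurable]
  have hint : Integrable (fun x : Mat × Mat => f (x.2 * x.1)) (ν.prod (convPow ν p)) := by
    refine ⟨((hf.comp (continuous_snd.matrix_mul continuous_fst))).aestronglyMeasurable, ?_⟩
    exact HasFiniteIntegral.of_bounded (C := Mb)
      (Filter.Eventually.of_forall fun x => by simpa using hMb _)
  exact integral_prod _ hint


lemma opN_listProd_le {s : ℝ} (hs : 0 ≤ s) {K : Set Mat} (hKs : ∀ g ∈ K, opN g ≤ s) :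
    ∀ (p : ℕ) (t : Fin p → Mat), (∀ i, t i ∈ K) →
      opN ((List.ofFn t).reverse.prod) ≤ s ^ p := by
  intro p
  induction p with
  | zero =>
    intro t _
    simp only [List.ofFn_zero, List.reverse_nil, List.prod_nil, pow_zero]
    exact opN_one_le
  | succ n ih =>
    intro t ht
    rw [List.ofFn_succ, List.reverse_cons, List.prod_append]
    simp only [List.prod_cons, List.prod_nil, mul_one]
    calc opN ((List.ofFn fun i : Fin n => t i.succ).reverse.prod * t 0)
        ≤ opN ((List.ofFn fun i : Fin n => t i.succ).reverse.prod) * opN (t 0) :=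
          opN_mul_le _ _
      _ ≤ s ^ n * s :=
          mul_le_mul (ih _ (fun i => ht i.succ)) (hKs _ (ht 0)) (opN_nonneg _)
            (pow_nonneg hs n)
      _ = s ^ (n + 1) := by rw [pow_succ]

lemma convPow_opN_ae (ν : Measure Mat) [IsProbabilityMeasure ν]
    {K : Set Mat} (hsupp : ν Kᶜ = 0)
    {s : ℝ} (hs : 0 ≤ s) (hKs : ∀ g ∈ K, opN g ≤ s) (p : ℕ) :
    ∀ᵐ A ∂(convPow ν p), opN A ≤ s ^ p := by
  unfold convPow
  rw [MeasureTheory.ae_map_iff (measurable_listProd p).aemeasurable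
    (isClosed_le continuous_opN continuous_const).measurableSet]
  have hsub : {t : Fin p → Mat | ¬ opN ((List.ofFn t).reverse.prod) ≤ s ^ p}
      ⊆ ⋃ i : Fin p, {t : Fin p → Mat | t i ∈ Kᶜ} := by
    intro t ht
    by_contra hc
    simp only [Set.mem_iUnion, Set.mem_setOf_eq, not_exists, Set.mem_compl_iff,
      not_not] at hc
    exact ht (opN_listProd_le hs hKs p t hc)
  rw [MeasureTheory.ae_iff]
  refine measure_mono_null hsub (measure_iUnion_null fun i => ?_)
  have : {t : Fin p → Mat | t i ∈ Kᶜ} = (fun t : Fin p → Mat => t i) ⁻¹' Kᶜ := rfl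
  rw [this]
  exact Measure.pi_eval_preimage_null _ hsupp

lemma phi_bdd (P : Measure Mat) [IsProbabilityMeasure P]
    {f : Mat → ℝ} {Mb : ℝ} (hMb : ∀ A, |f A| ≤ Mb) (h : Mat) :
    |∫ A, f (A * h) ∂P| ≤ Mb := by
  have := norm_integral_le_of_norm_le_const (μ := P) (f := fun A => f (A * h)) (C := Mb)
    (Filter.Eventually.of_forall fun A => by simpa using hMb _)
  simpa [measure_univ] using this

lemma phi_lip (P : Measure Mat) [IsProbabilityMeasure P] {R : ℝ}
    (hae : ∀ᵐ A ∂P, opN A ≤ R)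
    {f : Mat → ℝ} {C Mb : ℝ} (hC : 0 ≤ C)
    (hlip : ∀ A B, |f A - f B| ≤ C * opN (A - B)) (hMb : ∀ A, |f A| ≤ Mb) :
    ∀ h h', |(∫ A, f (A * h) ∂P) - ∫ A, f (A * h') ∂P| ≤ (C * R) * opN (h - h') := by
  intro h h'
  have hcont : Continuous f := lipschitz_continuous hlip
  have hint : ∀ g : Mat, Integrable (fun A => f (A * g)) P := fun g =>
    integrable_of_cont_bdd P (hcont.comp (continuous_id.matrix_mul continuous_const))
      (fun A => hMb _)
  rw [← integral_sub (hint h) (hint h')]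
  have hb : ∀ᵐ A ∂P, ‖f (A * h) - f (A * h')‖ ≤ C * R * opN (h - h') := by
    filter_upwards [hae] with A hA
    calc ‖f (A * h) - f (A * h')‖ = |f (A * h) - f (A * h')| := rfl
      _ ≤ C * opN (A * h - A * h') := hlip _ _
      _ = C * opN (A * (h - h')) := by rw [mul_sub]
      _ ≤ C * (opN A * opN (h - h')) := mul_le_mul_of_nonneg_left (opN_mul_le _ _) hC
      _ ≤ C * (R * opN (h - h')) :=
          mul_le_mul_of_nonneg_left
            (mul_le_mul_of_nonneg_right hA (opN_nonneg _)) hC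
      _ = C * R * opN (h - h') := by ring
  have := norm_integral_le_of_norm_le_const (μ := P) hb
  simpa [measure_univ] using this

lemma key (μ μ' : Measure Mat) [IsProbabilityMeasure μ] [IsProbabilityMeasure μ']
    {K : Set Mat} (hsupp : μ Kᶜ = 0) (hsupp' : μ' Kᶜ = 0)
    {s : ℝ} (hs1 : 1 ≤ s) (hKs : ∀ g ∈ K, opN g ≤ s)
    (hbdd : BddAbove (dWSet μ' μ)) :
    ∀ (p : ℕ) (f : Mat → ℝ) (C Mb : ℝ), 0 ≤ C →
      (∀ A B, |f A - f B| ≤ C * opN (A - B)) → (∀ A, |f A| ≤ Mb) →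
      |(∫ g, f g ∂(convPow μ p)) - ∫ g, f g ∂(convPow μ' p)|
        ≤ C * p * s ^ (p - 1) * dW μ' μ := by
  have hs0 : (0:ℝ) ≤ s := le_trans zero_le_one hs1
  intro p
  induction p with
  | zero =>
    intro f C Mb hC hlip hMb
    rw [convPow_zero μ, convPow_zero μ']
    simp
  | succ n ih =>
    intro f C Mb hC hlip hMb
    have hcont : Continuous f := lipschitz_continuous hlip
    set P := convPow μ n with hP
    set P' := convPow μ' n with hP'
    set φ : Mat → ℝ := fun h => ∫ A, f (A * h) ∂P with hφ
    set φ' : Mat → ℝ := fun h => ∫ A, f (A * h) ∂P' with hφ'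
    have haeP : ∀ᵐ A ∂P, opN A ≤ s ^ n := convPow_opN_ae μ hsupp hs0 hKs n
    have haeP' : ∀ᵐ A ∂P', opN A ≤ s ^ n := convPow_opN_ae μ' hsupp' hs0 hKs n
    have hφlip : ∀ h h', |φ h - φ h'| ≤ (C * s ^ n) * opN (h - h') :=
      phi_lip P haeP hC hlip hMb
    have hφ'lip : ∀ h h', |φ' h - φ' h'| ≤ (C * s ^ n) * opN (h - h') :=
      phi_lip P' haeP' hC hlip hMb
    have hφbd : ∀ h, |φ h| ≤ Mb := fun h => phi_bdd P hMb h
    have hφ'bd : ∀ h, |φ' h| ≤ Mb := fun h => phi_bdd P' hMb h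
    have hφcont : Continuous φ := lipschitz_continuous hφlip
    have hφ'cont : Continuous φ' := lipschitz_continuous hφ'lip
    have hintφ : ∀ (σ : Measure Mat) [IsProbabilityMeasure σ], Integrable φ σ := by
      intro σ _; exact integrable_of_cont_bdd σ hφcont hφbd
    have hintφ' : ∀ (σ : Measure Mat) [IsProbabilityMeasure σ], Integrable φ' σ := by
      intro σ _; exact integrable_of_cont_bdd σ hφ'cont hφ'bd
    rw [integral_convPow_succ μ n hcont hMb, integral_convPow_succ μ' n hcont hMb]
    have hdecomp : (∫ h, φ h ∂μ) - (∫ h, φ' h ∂μ')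
        = ((∫ h, φ h ∂μ) - (∫ h, φ h ∂μ')) + ((∫ h, φ h ∂μ') - (∫ h, φ' h ∂μ')) := by
      ring
    have hT2 : |(∫ h, φ h ∂μ) - (∫ h, φ h ∂μ')| ≤ (C * s ^ n) * dW μ' μ :=
      abs_integral_sub_le_dW μ' μ hbdd (mul_nonneg hC (pow_nonneg hs0 n)) hφlip ⟨Mb, hφbd⟩
    have hT1 : |(∫ h, φ h ∂μ') - (∫ h, φ' h ∂μ')|
        ≤ (C * s) * n * s ^ (n - 1) * dW μ' μ := by
      rw [← integral_sub (hintφ μ') (hintφ' μ')]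
      have hK' : ∀ᵐ h ∂μ', h ∈ K := MeasureTheory.ae_iff.mpr hsupp'
      have hb : ∀ᵐ h ∂μ', ‖φ h - φ' h‖ ≤ (C * s) * n * s ^ (n - 1) * dW μ' μ := by
        filter_upwards [hK'] with h hh
        have hfh : ∀ A B, |f (A * h) - f (B * h)| ≤ (C * s) * opN (A - B) := by
          intro A B
          calc |f (A * h) - f (B * h)| ≤ C * opN (A * h - B * h) := hlip _ _
            _ = C * opN ((A - B) * h) := by rw [sub_mul]
            _ ≤ C * (opN (A - B) * opN h) := mul_le_mul_of_nonneg_left (opN_mul_le _ _) hC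
            _ ≤ C * (opN (A - B) * s) :=
                mul_le_mul_of_nonneg_left
                  (mul_le_mul_of_nonneg_left (hKs h hh) (opN_nonneg _)) hC
            _ = (C * s) * opN (A - B) := by ring
        have := ih (fun A => f (A * h)) (C * s) Mb (mul_nonneg hC hs0) hfh (fun A => hMb _)
        simpa [hφ, hφ', hP, hP'] using this
      have := norm_integral_le_of_norm_le_const (μ := μ') hb
      simpa [measure_univ] using this
    have hstep : (C * s) * n * s ^ (n - 1) * dW μ' μ ≤ C * n * s ^ n * dW μ' μ := by
      rcases n with _ | m
      · simp
      · have hpow : s ^ (m + 1 - 1) = s ^ m := rfl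
        rw [hpow]
        apply le_of_eq
        rw [pow_succ]
        ring
    calc |(∫ h, φ h ∂μ) - ∫ h, φ' h ∂μ'|
        = |((∫ h, φ h ∂μ) - (∫ h, φ h ∂μ')) + ((∫ h, φ h ∂μ') - (∫ h, φ' h ∂μ'))| := by
          rw [← hdecomp]
      _ ≤ |(∫ h, φ h ∂μ) - (∫ h, φ h ∂μ')| + |(∫ h, φ h ∂μ') - (∫ h, φ' h ∂μ')| :=
          abs_add_le _ _
      _ ≤ (C * s ^ n) * dW μ' μ + (C * s) * n * s ^ (n - 1) * dW μ' μ :=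
          add_le_add hT2 hT1
      _ ≤ (C * s ^ n) * dW μ' μ + C * n * s ^ n * dW μ' μ := by linarith [hstep]
      _ = C * (n + 1 : ℕ) * s ^ ((n + 1) - 1) * dW μ' μ := by
          push_cast
          ring

end DWAux

open DWAux in
/-- For probability measures supported in a compact set `K` of invertible matrices with
`max(‖g‖,‖g⁻¹‖)² ≤ L` on `K`,
`d_W((μ')^{*p}, μ^{*p}) ≤ p · L^{(p−1)/2} · d_W(μ', μ)`. -/
theorem dW_convPow_le {d : ℕ}
    (K : Set (Matrix (Fin d) (Fin d) ℝ)) (hK : IsCompact K)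
    (hKinv : ∀ g ∈ K, IsUnit g)
    (μ μ' : Measure (Matrix (Fin d) (Fin d) ℝ))
    [IsProbabilityMeasure μ] [IsProbabilityMeasure μ']
    (hsupp : μ Kᶜ = 0) (hsupp' : μ' Kᶜ = 0)
    (L : ℝ) (hL1 : 1 ≤ L) (hL : ∀ g ∈ K, max (opN g) (opN g⁻¹) ^ 2 ≤ L)
    (p : ℕ) (hp : 1 ≤ p) :
    dW (convPow μ' p) (convPow μ p) ≤
      (p : ℝ) * L ^ (((p : ℝ) - 1) / 2) * dW μ' μ := by
  have hL0 : (0:ℝ) ≤ L := le_trans zero_le_one hL1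
  set s : ℝ := Real.sqrt L with hsdef
  have hsq : s ^ 2 = L := Real.sq_sqrt hL0
  have hs0 : (0:ℝ) ≤ s := Real.sqrt_nonneg L
  have hs1 : (1:ℝ) ≤ s := by nlinarith
  have hKs : ∀ g ∈ K, opN g ≤ s := by
    intro g hg
    have h1 : opN g ^ 2 ≤ L := by
      refine le_trans ?_ (hL g hg)
      exact pow_le_pow_left₀ (opN_nonneg g) (le_max_left _ _) 2
    nlinarith [opN_nonneg g]
  have hKsub : {A : Matrix (Fin d) (Fin d) ℝ | opN A ≤ s}ᶜ ⊆ Kᶜ := by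
    intro A hA hAK
    exact hA (hKs A hAK)
  have hμR : μ {A : Matrix (Fin d) (Fin d) ℝ | opN A ≤ s}ᶜ = 0 :=
    measure_mono_null hKsub hsupp
  have hμ'R : μ' {A : Matrix (Fin d) (Fin d) ℝ | opN A ≤ s}ᶜ = 0 :=
    measure_mono_null hKsub hsupp'
  have hbdd : BddAbove (dWSet μ' μ) := bddAbove_dWSet μ' μ hμ'R hμR
  have hdnn : (0:ℝ) ≤ dW μ' μ := dW_nonneg hbdd
  have hpow : s ^ (p - 1) = L ^ (((p : ℝ) - 1) / 2) := by
    have hcast : ((p - 1 : ℕ) : ℝ) = (p : ℝ) - 1 := by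
      rw [Nat.cast_sub hp]; simp
    have h1 : s = L ^ ((1:ℝ)/2) := by rw [hsdef, Real.sqrt_eq_rpow]
    rw [h1, ← Real.rpow_natCast (L ^ ((1:ℝ)/2)) (p-1), ← Real.rpow_mul hL0, hcast]
    congr 1
    ring
  have hRHS0 : (0:ℝ) ≤ (p : ℝ) * L ^ (((p : ℝ) - 1) / 2) * dW μ' μ :=
    mul_nonneg (mul_nonneg (Nat.cast_nonneg p) (Real.rpow_nonneg hL0 _)) hdnn
  rw [dW_eq_sSup]
  refine Real.sSup_le ?_ hRHS0
  rintro r ⟨f, hlip, ⟨Mb, hMb⟩, rfl⟩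
  have hkey := key μ μ' hsupp hsupp' hs1 hKs hbdd p f 1 Mb zero_le_one
    (fun A B => by simpa using hlip A B) hMb
  calc |(∫ g, f g ∂(convPow μ p)) - ∫ g, f g ∂(convPow μ' p)|
      ≤ 1 * p * s ^ (p - 1) * dW μ' μ := hkey
    _ = (p : ℝ) * L ^ (((p : ℝ) - 1) / 2) * dW μ' μ := by rw [one_mul, hpow]
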